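/- There is a universal constant C such that for every even n = 2m and every nondeterministic branching program P of width W ≥ 2 and length T ≥ 2 on n Boolean inputs, there exist an even natural number t ≤ C·(1+log₂W)·(1+log₂T) and maps G, H : {0,1}^m → ({0,1}^t → {0,1}), with H(b) ∧-invariant for every b ∈ {0,1}^m, such that for all a, b ∈ {0,1}^m: P accepts the concatenated input (a,b) if and only if p_alt(G(a), H(b)) = 0 (false). -/

import Mathlib

/-- Alternating fold over the Boolean hypercube: flag `true` means the first
remaining coordinate is combined with AND, `false` means OR; flags alternate. -/
def altFold : (n : ℕ) → Bool → ((Fin n → Bool) → Bool) → Bool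
  | 0, _, f => f Fin.elim0
  | n + 1, q, f =>
    if q then
      altFold n (!q) (fun x => f (Fin.cons false x)) &&
        altFold n (!q) (fun x => f (Fin.cons true x))
    else
      altFold n (!q) (fun x => f (Fin.cons false x)) ||
        altFold n (!q) (fun x => f (Fin.cons true x))

/-- Alternating product `p_alt(u,v)`: AND over odd-indexed coordinates
(i₁, i₃, …) and OR over even-indexed ones (i₂, i₄, …), applied to the
coordinatewise AND of `u` and `v`. -/
def altProd {t : ℕ} (u v : (Fin t → Bool) → Bool) : Bool :=
  altFold t true fun x => u x && v x

/-- A tensor is ∧-invariant if it does not depend on the odd-indexed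
coordinates i₁, i₃, …, i_{t-1} (which have 0-based indices 0, 2, …). -/
def AndInvariant {t : ℕ} (u : (Fin t → Bool) → Bool) : Prop :=
  ∀ x y : Fin t → Bool, (∀ i : Fin t, i.1 % 2 = 1 → x i = y i) → u x = u y

/-- A tensor is max-invariant if it does not depend on the even-indexed
coordinates i₂, i₄, …, i_t (which have 0-based indices 1, 3, …). -/
def MaxInvariant {t : ℕ} (u : (Fin t → Bool) → Bool) : Prop :=
  ∀ x y : Fin t → Bool, (∀ i : Fin t, i.1 % 2 = 0 → x i = y i) → u x = u y

/-- Alternating tropical fold: flag `true` means the first remaining coordinate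
is averaged (𝔼), `false` means it is maximized; flags alternate. -/
def tropFold : (n : ℕ) → Bool → ((Fin n → Bool) → ℚ) → ℚ
  | 0, _, f => f Fin.elim0
  | n + 1, q, f =>
    if q then
      (tropFold n (!q) (fun x => f (Fin.cons false x)) +
        tropFold n (!q) (fun x => f (Fin.cons true x))) / 2
    else
      max (tropFold n (!q) (fun x => f (Fin.cons false x)))
        (tropFold n (!q) (fun x => f (Fin.cons true x)))

/-- Tropical similarity `s(u,v)`: 𝔼 over odd-indexed coordinates and max over
even-indexed ones, applied to the coordinatewise product of `u` and `v`. -/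
def tropSim {t : ℕ} (u v : (Fin t → Bool) → Bool) : ℚ :=
  tropFold t true fun x => (if u x then (1 : ℚ) else 0) * (if v x then (1 : ℚ) else 0)

/-- A nondeterministic branching program on `n` Boolean inputs: `len` layers,
each of `width` nodes; layer `i` (0-based, for `i + 1 < len`) reads input
variable `var i`; `edge i u v m` says there is an edge from node `u` of layer
`i` to node `v` of layer `i+1` marked with the bit `m`. -/
structure BP (n : ℕ) where
  len : ℕ
  width : ℕ
  var : ℕ → Fin n
  edge : ℕ → Fin width → Fin width → Bool → Prop

/-- `P` accepts `x` iff there is a path from the start node (layer 0, node 0)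
to the accepting node (last layer, node 0) using only edges whose mark equals
the value of the variable associated with the edge's starting layer. -/
def BP.Accepts {n : ℕ} (P : BP n) (x : Fin n → Bool) : Prop :=
  ∃ p : ℕ → Fin P.width, (p 0).1 = 0 ∧ (p (P.len - 1)).1 = 0 ∧
    ∀ i : ℕ, i + 1 < P.len → P.edge i (p i) (p (i + 1)) (x (P.var i))

/-! ### Stream machinery -/

/-- cons for streams -/
def scons (c : Bool) (s : ℕ → Bool) : ℕ → Bool
  | 0 => c
  | l + 1 => s l

/-- stream version of `altFold` -/
def altS : ℕ → Bool → ((ℕ → Bool) → Bool) → Bool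
  | 0, _, F => F (fun _ => false)
  | n + 1, q, F =>
    if q then
      altS n (!q) (fun s => F (scons false s)) && altS n (!q) (fun s => F (scons true s))
    else
      altS n (!q) (fun s => F (scons false s)) || altS n (!q) (fun s => F (scons true s))

def ext (n : ℕ) (x : Fin n → Bool) : ℕ → Bool := fun l => if h : l < n then x ⟨l, h⟩ else false

lemma ext_cons (n : ℕ) (c : Bool) (x : Fin n → Bool) :
    ext (n + 1) (Fin.cons c x) = scons c (ext n x) := by
  funext l
  cases l with
  | zero => simp [ext, scons, show (⟨0, Nat.succ_pos n⟩ : Fin (n+1)) = 0 from rfl]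
  | succ l =>
    simp only [ext, scons]
    by_cases h : l < n
    · rw [dif_pos (by omega), dif_pos h]
      exact @Fin.cons_succ n (fun _ => Bool) c x ⟨l, h⟩
    · rw [dif_neg (by omega), dif_neg h]

lemma altFold_ext : ∀ (n : ℕ) (q : Bool) (F : (ℕ → Bool) → Bool),
    (∀ s s', (∀ l, l < n → s l = s' l) → F s = F s') →
    altFold n q (fun x => F (ext n x)) = altS n q F := by
  intro n
  induction n with
  | zero =>
    intro q F hdep
    simp only [altFold, altS]
    exact hdep _ _ (by omega)
  | succ n ih =>
    intro q F hdep
    have key : ∀ c : Bool,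
        altFold n (!q) (fun x => F (ext (n+1) (Fin.cons c x))) =
          altS n (!q) (fun s => F (scons c s)) := by
      intro c
      have : (fun x : Fin n → Bool => F (ext (n+1) (Fin.cons c x))) =
          (fun x : Fin n → Bool => F (scons c (ext n x))) := by
        funext x; rw [ext_cons]
      rw [this]
      exact ih (!q) (fun s => F (scons c s)) (by
        intro s s' h
        apply hdep
        intro l hl
        cases l with
        | zero => rfl
        | succ l => exact h l (by omega))
    simp only [altFold, altS]
    rw [key false, key true]

lemma altS_false_and {n : ℕ} {F : (ℕ → Bool) → Bool} :
    altS (n + 1) true F = false ↔ ∃ c, altS n false (fun s => F (scons c s)) = false := by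
  show ((altS n false fun s => F (scons false s)) && altS n false fun s => F (scons true s))
      = false ↔ _
  rw [Bool.and_eq_false_iff]
  constructor
  · rintro (h | h)
    · exact ⟨false, h⟩
    · exact ⟨true, h⟩
  · rintro ⟨c, h⟩
    cases c
    · exact Or.inl h
    · exact Or.inr h

lemma altS_false_or {n : ℕ} {F : (ℕ → Bool) → Bool} :
    altS (n + 1) false F = false ↔ ∀ c, altS n true (fun s => F (scons c s)) = false := by
  show ((altS n true fun s => F (scons false s)) || altS n true fun s => F (scons true s))
      = false ↔ _
  rw [Bool.or_eq_false_iff]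
  constructor
  · rintro ⟨h1, h2⟩ c
    cases c
    · exact h1
    · exact h2
  · intro h
    exact ⟨h false, h true⟩

/-- consuming an even number of ignored coordinates -/
lemma altS_shift2 : ∀ (d : ℕ) (n : ℕ) (q : Bool) (F0 : (ℕ → Bool) → Bool),
    altS (2 * d + n) q (fun s => F0 (fun l => s (l + 2 * d))) = altS n q F0 := by
  intro d
  induction d with
  | zero =>
    intro n q F0
    simp only [Nat.mul_zero, Nat.zero_add, Nat.add_zero]
  | succ d ih =>
    intro n q F0
    have hidx : 2 * (d + 1) + n = (2 * d + n) + 1 + 1 := by ring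
    rw [hidx]
    have inner : ∀ (q' : Bool) (c c' : Bool),
        altS (2 * d + n) q' (fun s => F0 (fun l => scons c (scons c' s) (l + 2 * (d+1)))) =
          altS n q' F0 := by
      intro q' c c'
      have he : (fun s : ℕ → Bool => F0 (fun l => scons c (scons c' s) (l + 2 * (d+1)))) =
          (fun s : ℕ → Bool => F0 (fun l => s (l + 2 * d))) := by
        funext s
        congr 1
        try (funext l; rw [show l + 2 * (d+1) = (l + 2 * d) + 1 + 1 from by ring]; try rfl)
      rw [he]
      exact ih n q' F0
    cases q with
    | false =>
      simp only [altS, Bool.not_false, Bool.not_true, if_true, if_false]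
      simp only [inner]
      try simp
    | true =>
      simp only [altS, Bool.not_false, Bool.not_true, if_true, if_false]
      simp only [inner]
      try simp

/-! ### Block lemma -/

def blockStr (w : ℕ) (g : ℕ → Bool) (σ : Bool) (s : ℕ → Bool) : ℕ → Bool :=
  fun l =>
    if l < 2 * w then (if l % 2 = 0 then g (l / 2) else false)
    else if l = 2 * w then false
    else if l = 2 * w + 1 then σ
    else s (l - (2 * w + 2))

/-- positions a block-function may depend on -/
def BlockDep (w : ℕ) (F : (ℕ → Bool) → Bool) : Prop :=
  ∀ s s', (∀ l, ((l % 2 = 0 ∧ l < 2 * w) ∨ l = 2 * w + 1 ∨ 2 * w + 2 ≤ l) → s l = s' l) →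
    F s = F s'

lemma blockStr_zero (g : ℕ → Bool) (σ : Bool) (s : ℕ → Bool) :
    blockStr 0 g σ s = scons false (scons σ s) := by
  funext l
  match l with
  | 0 => rfl
  | 1 => rfl
  | (l+2) =>
    show (if (l+2 : ℕ) < 0 then _ else if (l+2 : ℕ) = 0 then _ else if (l+2:ℕ) = 1 then _
      else s ((l+2) - 2)) = s l
    rw [if_neg (by omega), if_neg (by omega), if_neg (by omega)]
    congr 1

lemma blockStr_succ (w : ℕ) (c : Bool) (g : ℕ → Bool) (σ : Bool) (s : ℕ → Bool) :
    blockStr (w + 1) (scons c g) σ s = scons c (scons false (blockStr w g σ s)) := by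
  funext l
  match l with
  | 0 =>
    show (if (0:ℕ) < 2*(w+1) then _ else _) = c
    rw [if_pos (by omega), if_pos (by omega)]
    rfl
  | 1 =>
    show (if (1:ℕ) < 2*(w+1) then (if (1:ℕ) % 2 = 0 then _ else false) else _) = false
    rw [if_pos (by omega), if_neg (by omega)]
  | (l+2) =>
    show blockStr (w+1) (scons c g) σ s (l+2) = blockStr w g σ s l
    simp only [blockStr]
    by_cases h1 : l < 2 * w
    · rw [if_pos (by omega), if_pos h1]
      by_cases h2 : l % 2 = 0
      · rw [if_pos (by omega : (l+2) % 2 = 0), if_pos h2]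
        rw [show (l+2)/2 = l/2 + 1 from by omega]
        rfl
      · rw [if_neg (by omega : ¬ (l+2) % 2 = 0), if_neg h2]
    · rw [if_neg (by omega), if_neg h1]
      by_cases h2 : l = 2 * w
      · rw [if_pos (by omega), if_pos h2]
      · rw [if_neg (by omega), if_neg h2]
        by_cases h3 : l = 2 * w + 1
        · rw [if_pos (by omega), if_pos h3]
        · rw [if_neg (by omega), if_neg h3]
          rw [show l + 2 - (2*(w+1)+2) = l - (2*w+2) from by omega]

lemma altS_block : ∀ (w : ℕ) (n : ℕ) (F : (ℕ → Bool) → Bool), BlockDep w F →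
    (altS (2 * w + 2 + n) true F = false ↔
      ∃ g : ℕ → Bool, ∀ σ : Bool, altS n true (fun s => F (blockStr w g σ s)) = false) := by
  intro w
  induction w with
  | zero =>
    intro n F hdep
    rw [show 2 * 0 + 2 + n = n + 1 + 1 from by ring]
    rw [altS_false_and]
    have collapse : ∀ c : Bool, (fun s => F (scons c s)) = (fun s => F (scons false s)) := by
      intro c
      funext s
      apply hdep
      intro l hl
      rcases Nat.lt_or_ge l 1 with h2 | h2
      · interval_cases l
        · exact absurd hl (by omega)
      · obtain ⟨l', rfl⟩ : ∃ l', l = l' + 1 := ⟨l - 1, by omega⟩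
        rfl
    constructor
    · rintro ⟨c, hc⟩
      refine ⟨fun _ => false, ?_⟩
      rw [collapse c] at hc
      rw [altS_false_or] at hc
      intro σ
      have h1 : altS n true (fun s => F (scons false (scons σ s))) = false := hc σ
      simpa only [blockStr_zero] using h1
    · rintro ⟨g, hg⟩
      refine ⟨false, ?_⟩
      rw [altS_false_or]
      intro σ
      show altS n true (fun s => F (scons false (scons σ s))) = false
      have h1 := hg σ
      simpa only [blockStr_zero] using h1
  | succ w ih =>
    intro n F hdep
    rw [show 2 * (w+1) + 2 + n = (2 * w + 2 + n) + 1 + 1 from by ring]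
    rw [altS_false_and]
    have collapse : ∀ (c c' : Bool),
        (fun s => F (scons c (scons c' s))) = (fun s => F (scons c (scons false s))) := by
      intro c c'
      funext s
      apply hdep
      intro l hl
      rcases Nat.lt_or_ge l 2 with h2 | h2
      · interval_cases l
        · rfl
        · exact absurd hl (by omega)
      · obtain ⟨l', rfl⟩ : ∃ l', l = l' + 2 := ⟨l - 2, by omega⟩
        rfl
    have ihdep : ∀ c : Bool, BlockDep w (fun s => F (scons c (scons false s))) := by
      intro c s s' hag
      apply hdep
      intro l hl
      rcases Nat.lt_or_ge l 2 with h2 | h2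
      · interval_cases l
        · rfl
        · rfl
      · obtain ⟨l', rfl⟩ : ∃ l', l = l' + 2 := ⟨l - 2, by omega⟩
        show s l' = s' l'
        exact hag l' (by omega)
    constructor
    · rintro ⟨c, hc⟩
      rw [altS_false_or] at hc
      have h0 : altS (2*w+2+n) true (fun s => F (scons c (scons false s))) = false := hc false
      obtain ⟨g, hg⟩ := (ih n _ (ihdep c)).mp h0
      refine ⟨scons c g, ?_⟩
      intro σ
      have h1 := hg σ
      show altS n true (fun s => F (blockStr (w+1) (scons c g) σ s)) = false
      simp only [blockStr_succ]
      exact h1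
    · rintro ⟨g, hg⟩
      refine ⟨g 0, ?_⟩
      rw [altS_false_or]
      intro c'
      show altS (2*w+2+n) true (fun s => F (scons (g 0) (scons c' s))) = false
      rw [collapse (g 0) c']
      apply (ih n _ (ihdep (g 0))).mpr
      refine ⟨fun j => g (j+1), ?_⟩
      intro σ
      have h1 := hg σ
      have hgeq : g = scons (g 0) (fun j => g (j+1)) := by
        funext j
        cases j with
        | zero => rfl
        | succ j => rfl
      rw [hgeq] at h1
      simp only [blockStr_succ] at h1
      exact h1

/-! ### Node encoding -/

def binVal : ℕ → (ℕ → Bool) → ℕ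
  | 0, _ => 0
  | w + 1, g => (if g 0 then 1 else 0) + 2 * binVal w (fun j => g (j + 1))

lemma binVal_congr : ∀ (w : ℕ) (g g' : ℕ → Bool), (∀ j, j < w → g j = g' j) →
    binVal w g = binVal w g' := by
  intro w
  induction w with
  | zero => intro g g' _; rfl
  | succ w ih =>
    intro g g' h
    simp only [binVal]
    rw [h 0 (by omega), ih (fun j => g (j+1)) (fun j => g' (j+1)) (fun j hj => h (j+1) (by omega))]

lemma binVal_testBit : ∀ (w n : ℕ), n < 2 ^ w → binVal w n.testBit = n := by
  intro w
  induction w with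
  | zero =>
    intro n hn
    interval_cases n
    rfl
  | succ w ih =>
    intro n hn
    simp only [binVal]
    have h1 : (fun j => n.testBit (j + 1)) = (n / 2).testBit := by
      funext j
      exact Nat.testBit_succ n j
    rw [h1, ih (n / 2) (by omega)]
    rw [Nat.testBit_zero]
    rcases Nat.mod_two_eq_zero_or_one n with h | h
    · rw [if_neg (by simp [h])]
      omega
    · rw [if_pos (by simp [h])]
      omega

/-- decode a node, with fallback -/
def pick {W : ℕ} (u : Fin W) (nv : ℕ) : Fin W :=
  if h : nv < W then ⟨nv, h⟩ else u

/-! ### The recursive tensors -/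

attribute [local instance] Classical.propDecidable

/-- Alice's tensor, stream form -/
noncomputable def Gs (m : ℕ) (P : BP (m + m)) (w : ℕ) (a : Fin m → Bool) :
    ℕ → ℕ → ℕ → Fin P.width → Fin P.width → (ℕ → Bool) → Bool
  | 0, i, _, u, v => fun s =>
      if h : (P.var i).1 < m then !(decide (P.edge i u v (a ⟨(P.var i).1, h⟩)))
      else !(decide (P.edge i u v (s 1)))
  | r + 1, i, j, u, v => fun s =>
      if j ≤ i + 1 then Gs m P w a r i j u v (fun l => s (l + (2 * w + 2)))
      else if s (2 * w + 1) then
        Gs m P w a r ((i + j) / 2) j (pick u (binVal w (fun jj => s (2 * jj)))) v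
          (fun l => s (l + (2 * w + 2)))
      else
        Gs m P w a r i ((i + j) / 2) u (pick u (binVal w (fun jj => s (2 * jj))))
          (fun l => s (l + (2 * w + 2)))

/-- Bob's tensor, stream form -/
noncomputable def Hs (m : ℕ) (P : BP (m + m)) (w : ℕ) (b : Fin m → Bool) :
    ℕ → ℕ → ℕ → (ℕ → Bool) → Bool
  | 0, i, _ => fun s =>
      if h : (P.var i).1 < m then true
      else decide (s 1 = b ⟨(P.var i).1 - m, by have := (P.var i).2; omega⟩)
  | r + 1, i, j => fun s =>
      if j ≤ i + 1 then Hs m P w b r i j (fun l => s (l + (2 * w + 2)))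
      else if s (2 * w + 1) then Hs m P w b r ((i + j) / 2) j (fun l => s (l + (2 * w + 2)))
      else Hs m P w b r i ((i + j) / 2) (fun l => s (l + (2 * w + 2)))

/-- `Hs` only reads odd coordinates -/
lemma Hs_odd (m : ℕ) (P : BP (m + m)) (w : ℕ) (b : Fin m → Bool) :
    ∀ (r i j : ℕ) (s s' : ℕ → Bool), (∀ l, l % 2 = 1 → s l = s' l) →
      Hs m P w b r i j s = Hs m P w b r i j s' := by
  intro r
  induction r with
  | zero =>
    intro i j s s' h
    simp only [Hs]
    rw [h 1 rfl]
  | succ r ih =>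
    intro i j s s' h
    have hsh : ∀ l, l % 2 = 1 →
        (fun l => s (l + (2 * w + 2))) l = (fun l => s' (l + (2 * w + 2))) l := by
      intro l hl
      exact h (l + (2 * w + 2)) (by omega)
    simp only [Hs]
    rw [h (2 * w + 1) (by omega)]
    by_cases hj : j ≤ i + 1
    · rw [if_pos hj, if_pos hj, ih _ _ _ _ hsh]
    · rw [if_neg hj, if_neg hj]
      by_cases hσ : s' (2 * w + 1)
      · rw [if_pos hσ, if_pos hσ, ih _ _ _ _ hsh]
      · rw [if_neg hσ, if_neg hσ, ih _ _ _ _ hsh]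

/-- `Gs` only reads coordinates `< r*(2w+2)+2` -/
lemma Gs_dep (m : ℕ) (P : BP (m + m)) (w : ℕ) (a : Fin m → Bool) :
    ∀ (r i j : ℕ) (u v : Fin P.width) (s s' : ℕ → Bool),
      (∀ l, l < r * (2 * w + 2) + 2 → s l = s' l) →
      Gs m P w a r i j u v s = Gs m P w a r i j u v s' := by
  intro r
  induction r with
  | zero =>
    intro i j u v s s' h
    simp only [Gs]
    rw [h 1 (by omega)]
  | succ r ih =>
    intro i j u v s s' h
    have hsh : ∀ l, l < r * (2 * w + 2) + 2 →
        (fun l => s (l + (2 * w + 2))) l = (fun l => s' (l + (2 * w + 2))) l := by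
      intro l hl
      exact h (l + (2 * w + 2)) (by nlinarith)
    have hbv : binVal w (fun jj => s (2 * jj)) = binVal w (fun jj => s' (2 * jj)) := by
      apply binVal_congr
      intro jj hjj
      exact h (2 * jj) (by nlinarith)
    simp only [Gs]
    rw [h (2 * w + 1) (by nlinarith)]
    by_cases hj : j ≤ i + 1
    · rw [if_pos hj, if_pos hj, ih _ _ _ _ _ _ hsh]
    · rw [if_neg hj, if_neg hj]
      by_cases hσ : s' (2 * w + 1)
      · rw [if_pos hσ, if_pos hσ, hbv, ih _ _ _ _ _ _ hsh]
      · rw [if_neg hσ, if_neg hσ, hbv, ih _ _ _ _ _ _ hsh]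

/-- `Hs` only reads coordinates `< r*(2w+2)+2` -/
lemma Hs_dep (m : ℕ) (P : BP (m + m)) (w : ℕ) (b : Fin m → Bool) :
    ∀ (r i j : ℕ) (s s' : ℕ → Bool),
      (∀ l, l < r * (2 * w + 2) + 2 → s l = s' l) →
      Hs m P w b r i j s = Hs m P w b r i j s' := by
  intro r
  induction r with
  | zero =>
    intro i j s s' h
    simp only [Hs]
    rw [h 1 (by omega)]
  | succ r ih =>
    intro i j s s' h
    have hsh : ∀ l, l < r * (2 * w + 2) + 2 →
        (fun l => s (l + (2 * w + 2))) l = (fun l => s' (l + (2 * w + 2))) l := by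
      intro l hl
      exact h (l + (2 * w + 2)) (by nlinarith)
    simp only [Hs]
    rw [h (2 * w + 1) (by nlinarith)]
    by_cases hj : j ≤ i + 1
    · rw [if_pos hj, if_pos hj, ih _ _ _ _ hsh]
    · rw [if_neg hj, if_neg hj]
      by_cases hσ : s' (2 * w + 1)
      · rw [if_pos hσ, if_pos hσ, ih _ _ _ _ hsh]
      · rw [if_neg hσ, if_neg hσ, ih _ _ _ _ hsh]

/-! ### Reachability -/

def Reach {n : ℕ} (P : BP n) (x : Fin n → Bool) (i j : ℕ) (u v : Fin P.width) : Prop :=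
  ∃ p : ℕ → Fin P.width, p i = u ∧ p j = v ∧
    ∀ l, i ≤ l → l + 1 ≤ j → P.edge l (p l) (p (l + 1)) (x (P.var l))

lemma reach_base {n : ℕ} (P : BP n) (x : Fin n → Bool) (i : ℕ) (u v : Fin P.width) :
    Reach P x i (i + 1) u v ↔ P.edge i u v (x (P.var i)) := by
  constructor
  · rintro ⟨p, hpi, hpj, hedge⟩
    have := hedge i le_rfl le_rfl
    rwa [hpi, hpj] at this
  · intro h
    refine ⟨fun l => if l ≤ i then u else v, by simp, by simp, ?_⟩
    intro l h1 h2
    have : l = i := by omega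
    subst this
    simpa using h

lemma reach_split {n : ℕ} (P : BP n) (x : Fin n → Bool) (i j mid : ℕ)
    (h1 : i ≤ mid) (h2 : mid ≤ j) (u v : Fin P.width) :
    Reach P x i j u v ↔ ∃ node : Fin P.width, Reach P x i mid u node ∧ Reach P x mid j node v := by
  constructor
  · rintro ⟨p, hpi, hpj, hedge⟩
    exact ⟨p mid, ⟨p, hpi, rfl, fun l hl1 hl2 => hedge l hl1 (by omega)⟩,
      ⟨p, rfl, hpj, fun l hl1 hl2 => hedge l (by omega) hl2⟩⟩
  · rintro ⟨node, ⟨p1, hp1i, hp1m, he1⟩, ⟨p2, hp2m, hp2j, he2⟩⟩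
    have hnodes : p1 mid = p2 mid := hp1m.trans hp2m.symm
    refine ⟨fun l => if l < mid then p1 l else p2 l, ?_, ?_, ?_⟩
    · show (if i < mid then p1 i else p2 i) = u
      by_cases h : i < mid
      · rw [if_pos h]; exact hp1i
      · rw [if_neg h]
        have hi : i = mid := by omega
        rw [hi, ← hnodes, ← hi]
        exact hp1i
    · show (if j < mid then p1 j else p2 j) = v
      rw [if_neg (by omega)]
      exact hp2j
    · intro l hl1 hl2
      show P.edge l (if l < mid then p1 l else p2 l) (if l + 1 < mid then p1 (l+1) else p2 (l+1))
        (x (P.var l))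
      by_cases hc : l + 1 ≤ mid
      · rw [if_pos (by omega)]
        by_cases hc2 : l + 1 < mid
        · rw [if_pos hc2]
          exact he1 l hl1 hc
        · rw [if_neg hc2]
          have hm : l + 1 = mid := by omega
          rw [hm, ← hnodes, ← hm]
          exact he1 l hl1 hc
      · rw [if_neg (by omega), if_neg (by omega)]
        exact he2 l (by omega) hl2

/-! ### small helpers -/

lemma append_left' (m : ℕ) (a b : Fin m → Bool) (i : Fin (m + m)) (h : i.1 < m) :
    Fin.append a b i = a ⟨i.1, h⟩ := by
  have he : i = Fin.castAdd m ⟨i.1, h⟩ := by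
    apply Fin.ext
    rfl
  conv_lhs => rw [he]
  exact Fin.append_left a b _

lemma append_right' (m : ℕ) (a b : Fin m → Bool) (i : Fin (m + m)) (h : ¬ i.1 < m) :
    Fin.append a b i = b ⟨i.1 - m, by have := i.2; omega⟩ := by
  have he : i = Fin.natAdd m ⟨i.1 - m, by have := i.2; omega⟩ := by
    apply Fin.ext
    show i.1 = m + (i.1 - m)
    omega
  conv_lhs => rw [he]
  exact Fin.append_right a b _

lemma altS_two (F : (ℕ → Bool) → Bool) :
    altS 2 true F = false ↔
      ∃ y : Bool, ∀ z : Bool, F (scons y (scons z (fun _ => false))) = false := by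
  have h : altS 2 true F =
      ((F (scons false (scons false (fun _ => false))) ||
        F (scons false (scons true (fun _ => false)))) &&
       (F (scons true (scons false (fun _ => false))) ||
        F (scons true (scons true (fun _ => false))))) := rfl
  rw [h, Bool.and_eq_false_iff, Bool.or_eq_false_iff, Bool.or_eq_false_iff]
  constructor
  · rintro (⟨h1, h2⟩ | ⟨h1, h2⟩)
    · refine ⟨false, fun z => ?_⟩
      cases z
      · exact h1
      · exact h2
    · refine ⟨true, fun z => ?_⟩
      cases z
      · exact h1
      · exact h2
  · rintro ⟨y, hy⟩
    cases y
    · exact Or.inl ⟨hy false, hy true⟩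
    · exact Or.inr ⟨hy false, hy true⟩

/-! ### Key correctness lemma -/

lemma key_lemma (m : ℕ) (P : BP (m + m)) (w : ℕ) (hw : P.width ≤ 2 ^ w)
    (a b : Fin m → Bool) :
    ∀ (r i j : ℕ) (u v : Fin P.width), i < j → j ≤ i + 2 ^ r →
      ((altS (r * (2 * w + 2) + 2) true
        (fun s => Gs m P w a r i j u v s && Hs m P w b r i j s)) = false ↔
        Reach P (Fin.append a b) i j u v) := by
  intro r
  induction r with
  | zero =>
    intro i j u v hij hle
    have h1 : (2:ℕ) ^ 0 = 1 := rfl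
    have hj : j = i + 1 := by omega
    subst hj
    rw [show 0 * (2 * w + 2) + 2 = 2 from by ring, altS_two, reach_base]
    by_cases h : (P.var i).1 < m
    · rw [append_left' m a b _ h]
      simp only [Gs, Hs, dif_pos h]
      constructor
      · rintro ⟨y, hy⟩
        have := hy false
        simpa using this
      · intro hE
        refine ⟨false, fun z => ?_⟩
        simpa using hE
    · rw [append_right' m a b _ h]
      simp only [Gs, Hs, dif_neg h]
      constructor
      · rintro ⟨y, hy⟩
        have := hy (b ⟨(P.var i).1 - m, by have := (P.var i).2; omega⟩)
        simp only [show ∀ (c z : Bool) (s : ℕ → Bool), scons c (scons z s) 1 = z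
          from fun _ _ _ => rfl] at this
        simpa using this
      · intro hE
        refine ⟨false, fun z => ?_⟩
        simp only [show ∀ (c z : Bool) (s : ℕ → Bool), scons c (scons z s) 1 = z
          from fun _ _ _ => rfl]
        by_cases hz : z = b ⟨(P.var i).1 - m, by have := (P.var i).2; omega⟩
        · subst hz
          simpa using hE
        · simp [hz]
  | succ r ih =>
    intro i j u v hij hle
    have hpow : (2:ℕ) ^ (r+1) = 2 * 2 ^ r := by ring
    have hpos : (1:ℕ) ≤ 2 ^ r := Nat.one_le_two_pow
    by_cases hfr : j ≤ i + 1
    · -- frozen round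
      have hF : (fun s => Gs m P w a (r+1) i j u v s && Hs m P w b (r+1) i j s)
          = (fun s => (fun s' => Gs m P w a r i j u v s' && Hs m P w b r i j s')
              (fun l => s (l + 2 * (w + 1)))) := by
        funext s
        simp only [Gs, Hs, if_pos hfr]
        rw [show 2 * w + 2 = 2 * (w + 1) from by ring]
      have hshift := altS_shift2 (w+1) (r * (2*w+2) + 2) true
        (fun s' => Gs m P w a r i j u v s' && Hs m P w b r i j s')
      rw [show (r+1) * (2*w+2) + 2 = 2 * (w+1) + (r * (2*w+2) + 2) from by ring, hF, hshift]
      exact ih i j u v hij (by omega)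
    · -- active round
      set mid := (i + j) / 2 with hmid
      have hi2 : i + 2 ≤ j := by omega
      have hm1 : i < mid := by omega
      have hm2 : mid < j := by omega
      have hm3 : mid ≤ i + 2 ^ r := by omega
      have hm4 : j ≤ mid + 2 ^ r := by omega
      -- block facts
      have hσb : ∀ (g : ℕ → Bool) (σ : Bool) (s : ℕ → Bool), blockStr w g σ s (2*w+1) = σ := by
        intro g σ s
        simp only [blockStr]
        rw [if_neg (by omega), if_neg (by omega)]
        simp
      have hbvb : ∀ (g : ℕ → Bool) (σ : Bool) (s : ℕ → Bool),
          binVal w (fun jj => blockStr w g σ s (2*jj)) = binVal w g := by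
        intro g σ s
        apply binVal_congr
        intro jj hjj
        simp only [blockStr]
        rw [if_pos (by omega), if_pos (by omega), show 2 * jj / 2 = jj from by omega]
      have hshb : ∀ (g : ℕ → Bool) (σ : Bool) (s : ℕ → Bool),
          (fun l => blockStr w g σ s (l + (2*w+2))) = s := by
        intro g σ s
        funext l
        simp only [blockStr]
        rw [if_neg (by omega), if_neg (by omega), if_neg (by omega),
          show l + (2*w+2) - (2*w+2) = l from by omega]
      have hG : ∀ (g : ℕ → Bool) (σ : Bool) (s : ℕ → Bool),
          Gs m P w a (r+1) i j u v (blockStr w g σ s) =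
            (if σ then Gs m P w a r mid j (pick u (binVal w g)) v s
             else Gs m P w a r i mid u (pick u (binVal w g)) s) := by
        intro g σ s
        simp only [Gs, if_neg hfr, hσb, hbvb, hshb]
        rfl
      have hH : ∀ (g : ℕ → Bool) (σ : Bool) (s : ℕ → Bool),
          Hs m P w b (r+1) i j (blockStr w g σ s) =
            (if σ then Hs m P w b r mid j s else Hs m P w b r i mid s) := by
        intro g σ s
        simp only [Hs, if_neg hfr, hσb, hshb]
        rfl
      -- dependence condition
      have hdep : BlockDep w (fun s => Gs m P w a (r+1) i j u v s && Hs m P w b (r+1) i j s) := by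
        intro s s' hag
        have hσ : s (2*w+1) = s' (2*w+1) := hag _ (by omega)
        have hbv : binVal w (fun jj => s (2*jj)) = binVal w (fun jj => s' (2*jj)) :=
          binVal_congr _ _ _ (fun jj hjj => hag _ (by omega))
        have hsh : (fun l => s (l + (2*w+2))) = (fun l => s' (l + (2*w+2))) :=
          funext fun l => hag _ (by omega)
        simp only [Gs, Hs, if_neg hfr, hσ, hbv, hsh]
      rw [show (r+1) * (2*w+2) + 2 = 2*w+2 + (r * (2*w+2) + 2) from by ring,
        altS_block w _ _ hdep]
      have hstep : ∀ g : ℕ → Bool,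
          (∀ σ : Bool, altS (r * (2*w+2) + 2) true
            (fun s => Gs m P w a (r+1) i j u v (blockStr w g σ s) &&
              Hs m P w b (r+1) i j (blockStr w g σ s)) = false) ↔
          (Reach P (Fin.append a b) i mid u (pick u (binVal w g)) ∧
           Reach P (Fin.append a b) mid j (pick u (binVal w g)) v) := by
        intro g
        rw [Bool.forall_bool]
        simp only [hG, hH]
        simp only [reduceIte, Bool.false_eq_true, if_true, if_false]
        rw [ih i mid u (pick u (binVal w g)) hm1 hm3,
          ih mid j (pick u (binVal w g)) v hm2 hm4]
        try tauto
      constructor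
      · rintro ⟨g, hg⟩
        rw [reach_split P (Fin.append a b) i j mid (by omega) (by omega)]
        exact ⟨pick u (binVal w g), (hstep g).mp hg⟩
      · intro hR
        rw [reach_split P (Fin.append a b) i j mid (by omega) (by omega)] at hR
        obtain ⟨node, hR1, hR2⟩ := hR
        refine ⟨fun jj => node.1.testBit jj, ?_⟩
        have hdec : pick u (binVal w (fun jj => node.1.testBit jj)) = node := by
          have hb : binVal w (fun jj => node.1.testBit jj) = node.1 :=
            binVal_testBit w node.1 (lt_of_lt_of_le node.2 hw)
          rw [hb]
          simp only [pick, dif_pos node.2]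
        rw [hstep]
        rw [hdec]
        exact ⟨hR1, hR2⟩

/-! ### Numeric bounds -/

lemma one_le_logb (n : ℕ) (hn : 2 ≤ n) : 1 ≤ Real.logb 2 n := by
  have h := Real.logb_le_logb_of_le (b := 2) (x := 2) (y := (n:ℝ)) (by norm_num) (by norm_num)
    (by exact_mod_cast hn)
  rwa [Real.logb_self_eq_one (by norm_num)] at h

lemma clog_le_logb (n : ℕ) (hn : 2 ≤ n) : (Nat.clog 2 n : ℝ) ≤ 1 + Real.logb 2 n := by
  have hc1 : 0 < Nat.clog 2 n := Nat.clog_pos (by norm_num) hn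
  have h1 : (2:ℕ) ^ (Nat.clog 2 n - 1) < n := by
    have := Nat.pow_pred_clog_lt_self (b := 2) (by norm_num) (x := n) (by omega)
    simpa [Nat.pred_eq_sub_one] using this
  have h2 : ((2:ℝ)) ^ (Nat.clog 2 n - 1) ≤ (n:ℝ) := by
    exact_mod_cast h1.le
  have h3 : Real.logb 2 ((2:ℝ) ^ (Nat.clog 2 n - 1)) ≤ Real.logb 2 n :=
    Real.logb_le_logb_of_le (by norm_num) (by positivity) h2
  rw [Real.logb_pow, Real.logb_self_eq_one (by norm_num), mul_one] at h3
  have h4 : ((Nat.clog 2 n - 1 : ℕ) : ℝ) = (Nat.clog 2 n : ℝ) - 1 := by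
    push_cast [Nat.cast_sub hc1]
    ring
  rw [h4] at h3
  linarith


/-- There is a universal constant `C` such that for every even
`n = 2m` and every nondeterministic branching program `P` of width `W ≥ 2` and
length `T ≥ 2` on `n` Boolean inputs, there are an even `t ≤ C·(1+log₂W)·(1+log₂T)`
and maps `G, H` from `{0,1}^m` to tensors of order `t`, with each `H b`
∧-invariant, such that `P` accepts `(a,b)` iff `p_alt(G a, H b) = false`. -/
theorem bp_to_oapt :
    ∃ C : ℝ, 0 < C ∧
      ∀ (m : ℕ) (P : BP (m + m)), 2 ≤ P.width → 2 ≤ P.len →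
        ∃ t : ℕ, Even t ∧
          (t : ℝ) ≤ C * (1 + Real.logb 2 P.width) * (1 + Real.logb 2 P.len) ∧
          ∃ G H : (Fin m → Bool) → ((Fin t → Bool) → Bool),
            (∀ b : Fin m → Bool, AndInvariant (H b)) ∧
            ∀ a b : Fin m → Bool,
              P.Accepts (Fin.append a b) ↔ altProd (G a) (H b) = false := by
  refine ⟨64, by norm_num, fun m P hW hT => ?_⟩
  have hw : P.width ≤ 2 ^ Nat.clog 2 P.width := Nat.le_pow_clog (by norm_num) _
  have hk : P.len ≤ 2 ^ Nat.clog 2 P.len := Nat.le_pow_clog (by norm_num) _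
  have hz : 0 < P.width := by omega
  set w := Nat.clog 2 P.width with hwdef
  set k := Nat.clog 2 P.len with hkdef
  set t := k * (2 * w + 2) + 2 with htdef
  refine ⟨t, ⟨k * (w + 1) + 1, by rw [htdef]; ring⟩, ?_, ?_⟩
  · -- the size bound
    have hbw : (w:ℝ) ≤ 1 + Real.logb 2 P.width := clog_le_logb P.width hW
    have hbk : (k:ℝ) ≤ 1 + Real.logb 2 P.len := clog_le_logb P.len hT
    have h1w : 1 ≤ Real.logb 2 P.width := one_le_logb P.width hW
    have h1k : 1 ≤ Real.logb 2 P.len := one_le_logb P.len hT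
    have e1 : (2*(w:ℝ)+2) ≤ 4*(1+Real.logb 2 P.width) := by nlinarith
    have e3 : (k:ℝ)*(2*(w:ℝ)+2) ≤ (1 + Real.logb 2 P.len) * (4*(1+Real.logb 2 P.width)) := by
      apply mul_le_mul hbk e1 (by positivity) (by nlinarith)
    have e4 : (2:ℝ) ≤ (1+Real.logb 2 P.width)*(1+Real.logb 2 P.len) := by nlinarith
    rw [htdef]
    push_cast
    nlinarith [e3, e4]
  · -- the construction
    refine ⟨fun a x => Gs m P w a k 0 (P.len - 1) ⟨0, hz⟩ ⟨0, hz⟩ (ext t x),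
      fun b x => Hs m P w b k 0 (P.len - 1) (ext t x), ?_, ?_⟩
    · -- ∧-invariance
      intro b x y hxy
      apply Hs_odd
      intro l hl
      simp only [ext]
      by_cases h : l < t
      · rw [dif_pos h, dif_pos h]
        exact hxy ⟨l, h⟩ hl
      · rw [dif_neg h, dif_neg h]
    · intro a b
      have hdep : ∀ s s' : ℕ → Bool, (∀ l, l < t → s l = s' l) →
          (Gs m P w a k 0 (P.len-1) ⟨0, hz⟩ ⟨0, hz⟩ s && Hs m P w b k 0 (P.len-1) s) =
          (Gs m P w a k 0 (P.len-1) ⟨0, hz⟩ ⟨0, hz⟩ s' && Hs m P w b k 0 (P.len-1) s') := by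
        intro s s' h
        rw [Gs_dep m P w a k 0 (P.len-1) _ _ s s' (fun l hl => h l hl),
          Hs_dep m P w b k 0 (P.len-1) s s' (fun l hl => h l hl)]
      have hb1 := altFold_ext t true
        (fun s => Gs m P w a k 0 (P.len-1) ⟨0, hz⟩ ⟨0, hz⟩ s && Hs m P w b k 0 (P.len-1) s) hdep
      have hb0 : altProd (fun x => Gs m P w a k 0 (P.len - 1) ⟨0, hz⟩ ⟨0, hz⟩ (ext t x))
          (fun x => Hs m P w b k 0 (P.len - 1) (ext t x)) =
          altFold t true (fun x => (fun s => Gs m P w a k 0 (P.len-1) ⟨0, hz⟩ ⟨0, hz⟩ s &&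
            Hs m P w b k 0 (P.len-1) s) (ext t x)) := rfl
      rw [hb0, hb1]
      rw [key_lemma m P w hw a b k 0 (P.len - 1) ⟨0, hz⟩ ⟨0, hz⟩ (by omega) (by omega)]
      -- Accepts ↔ Reach
      constructor
      · rintro ⟨p, h0, hl, he⟩
        exact ⟨p, Fin.ext h0, Fin.ext hl, fun l _ h2 => he l (by omega)⟩
      · rintro ⟨p, h0, hl, he⟩
        refine ⟨p, ?_, ?_, ?_⟩
        · rw [h0]
        · rw [hl]
        · intro l h2
          exact he l (by omega) (by omega)
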